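/- Let S be a fixed-size-n without-replacement design with inclusion probabilities π_k, t̂ = ∑_{k∈S} y_k/π_k the HT-estimator, and v_HH = (n/(n−1)) ∑_{k∈S} ( y_k/π_k − t̂/n )². Then E(v_HH) − Var(t̂) = (n/(n−1)) [ V_ms − Var(t̂) ], where V_ms = ∑_{k∈U} π_k ( y_k/π_k − t_y/n )² is the multinomial-sampling variance. Consequently, if Var(t̂) ≤ V_ms then E(v_HH) ≥ Var(t̂), i.e., v_HH is a conservative variance estimator. -/

import Mathlib

/-- Expectation on a finite probability space given by a weight function. -/
noncomputable def pexp {Ω : Type*} [Fintype Ω] (P f : Ω → ℝ) : ℝ :=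
  ∑ ω, P ω * f ω

/-- Variance on a finite probability space given by a weight function. -/
noncomputable def pvar {Ω : Type*} [Fintype Ω] (P f : Ω → ℝ) : ℝ :=
  ∑ ω, P ω * (f ω - pexp P f) ^ 2

/-- for a fixed-size-`n` without-replacement design with
inclusion probabilities `π`, HT estimator `t̂` and Hansen–Hurvitz-type
variance estimator `v_HH`, one has
`E(v_HH) − Var(t̂) = (n/(n−1)) (V_ms − Var(t̂))` where
`V_ms = ∑_k π k (y k/π k − t_y/n)²`; consequently if `Var(t̂) ≤ V_ms`
then `v_HH` is conservative: `Var(t̂) ≤ E(v_HH)`. -/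
theorem hh_variance_estimator_bias_and_conservative
    (N n : ℕ) (hn : 2 ≤ n)
    (π y : Fin N → ℝ) (hπpos : ∀ k, 0 < π k) (hπle : ∀ k, π k ≤ 1)
    (hsum : ∑ k, π k = (n : ℝ))
    (ty : ℝ) (hty : ty = ∑ k, y k)
    (Ω : Type*) [Fintype Ω]
    (P : Ω → ℝ) (hPnonneg : ∀ ω, 0 ≤ P ω) (hPsum : ∑ ω, P ω = 1)
    (S : Ω → Finset (Fin N)) (hsize : ∀ ω, (S ω).card = n)
    (hincl : ∀ k, ∑ ω, P ω * (if k ∈ S ω then 1 else 0) = π k)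
    (that : Ω → ℝ) (hthat : ∀ ω, that ω = ∑ k ∈ S ω, y k / π k)
    (vHH : Ω → ℝ)
    (hvHH : ∀ ω, vHH ω =
      ((n : ℝ) / ((n : ℝ) - 1)) * ∑ k ∈ S ω, (y k / π k - that ω / n) ^ 2)
    (Vms : ℝ) (hVms : Vms = ∑ k, π k * (y k / π k - ty / n) ^ 2) :
    pexp P vHH - pvar P that = ((n : ℝ) / ((n : ℝ) - 1)) * (Vms - pvar P that) ∧
    (pvar P that ≤ Vms → pvar P that ≤ pexp P vHH) := by
  classical
  have hn2 : (2:ℝ) ≤ (n:ℝ) := by exact_mod_cast hn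
  have hnne : (n:ℝ) ≠ 0 := by linarith
  have hn1ne : (n:ℝ) - 1 ≠ 0 := by linarith
  set c : ℝ := (n:ℝ) / ((n:ℝ) - 1) with hc
  have hcpos : 0 ≤ c := by
    apply div_nonneg <;> linarith
  set a : Fin N → ℝ := fun k => y k / π k with ha
  -- swap lemma
  have swap : ∀ g : Fin N → ℝ, ∑ ω, P ω * ∑ k ∈ S ω, g k = ∑ k, π k * g k := by
    intro g
    have h1 : ∀ ω, ∑ k ∈ S ω, g k = ∑ k, (if k ∈ S ω then 1 else 0) * g k := by
      intro ω
      rw [eq_comm]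
      simp_rw [ite_mul, one_mul, zero_mul]
      simp [Finset.sum_ite_mem]
    calc ∑ ω, P ω * ∑ k ∈ S ω, g k
        = ∑ ω, ∑ k, P ω * ((if k ∈ S ω then 1 else 0) * g k) := by
          simp_rw [h1, Finset.mul_sum]
      _ = ∑ k, (∑ ω, P ω * (if k ∈ S ω then 1 else 0)) * g k := by
          rw [Finset.sum_comm]; simp_rw [Finset.sum_mul, mul_assoc]
      _ = ∑ k, π k * g k := by simp_rw [hincl]
  have hπa : ∀ k, π k * a k = y k := by
    intro k; simp only [ha]; field_simp [(hπpos k).ne']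
  have hE : pexp P that = ty := by
    rw [pexp]
    simp_rw [hthat]
    rw [swap a]
    simp_rw [hπa]
    exact hty.symm
  set A : ℝ := ∑ k, π k * a k ^ 2 with hA
  set Q : ℝ := ∑ ω, P ω * that ω ^ 2 with hQ
  -- vHH pointwise
  have hv : ∀ ω, vHH ω = c * ((∑ k ∈ S ω, a k ^ 2) - that ω ^ 2 / n) := by
    intro ω
    rw [hvHH ω]
    congr 1
    have h1 : ∑ k ∈ S ω, a k = that ω := (hthat ω).symm
    have : ∑ k ∈ S ω, (y k / π k - that ω / n) ^ 2
        = ∑ k ∈ S ω, (a k ^ 2 - 2 * (that ω / n) * a k + (that ω / n)^2) := by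
      apply Finset.sum_congr rfl; intro k _; simp only [ha]; ring
    rw [this]
    rw [Finset.sum_add_distrib, Finset.sum_sub_distrib, ← Finset.mul_sum, h1,
      Finset.sum_const, hsize ω, nsmul_eq_mul]
    field_simp
    ring
  have hEv : pexp P vHH = c * (A - Q / n) := by
    rw [pexp]
    simp_rw [hv, mul_sub, Finset.sum_sub_distrib, ← mul_assoc,
      fun ω => mul_comm (P ω) c, mul_assoc, ← Finset.mul_sum]
    rw [swap (fun k => a k ^ 2)]
    simp_rw [div_eq_mul_inv, ← mul_assoc]
    rw [← Finset.sum_mul]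
    rw [← hQ, ← hA]
    ring
  have hVar : pvar P that = Q - ty ^ 2 := by
    rw [pvar, hE]
    have : ∀ ω, P ω * (that ω - ty)^2 = P ω * that ω ^2 - 2 * ty * (P ω * that ω) + ty^2 * P ω := by
      intro ω; ring
    simp_rw [this]
    rw [Finset.sum_add_distrib, Finset.sum_sub_distrib, ← Finset.mul_sum, ← Finset.mul_sum,
      hPsum]
    have h2 : ∑ ω, P ω * that ω = ty := by rw [← hE, pexp]
    rw [h2, ← hQ]
    ring
  have hVms : Vms = A - ty ^ 2 / n := by
    rw [hVms]
    have : ∀ k, π k * (y k / π k - ty / n)^2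
        = π k * a k ^ 2 - 2 * (ty / n) * (π k * a k) + (ty/n)^2 * π k := by
      intro k; simp only [ha]; ring
    simp_rw [this]
    rw [Finset.sum_add_distrib, Finset.sum_sub_distrib, ← Finset.mul_sum, ← Finset.mul_sum]
    simp_rw [hπa]
    rw [← hty, hsum, ← hA]
    field_simp
    ring
  have key : pexp P vHH - pvar P that = c * (Vms - pvar P that) := by
    rw [hEv, hVar, hVms, hc]
    field_simp
    ring
  refine ⟨key, fun hle => ?_⟩
  have : 0 ≤ c * (Vms - pvar P that) := mul_nonneg hcpos (by linarith)
  linarith
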